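/- Fix 1/2 < α < 1, κ₀ > 0, λ ∈ ℝ, and v₀, w₁ ∈ (0,1). With γ_σ(v, w, t) as defined below, there is a constant c depending only on α, v₀ and w₁ such that |γ_σ(v, w, t)| ≤ c λ² for all σ ∈ (0, κ₀], all t ≥ 1, and all v, w ∈ ℝ³ with |v| ≤ v₀ and |w| ≤ w₁; in particular the bound is uniform in σ and t. -/

import Mathlib

open scoped RealInnerProductSpace

/-- The unit vector `e(θ,φ) = (sinθ cosφ, sinθ sinφ, cosθ)` on the sphere. -/
noncomputable def sphDir (θ φ : ℝ) : EuclideanSpace ℝ (Fin 3) :=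
  WithLp.toLp 2 ![Real.sin θ * Real.cos φ, Real.sin θ * Real.sin φ, Real.cos θ]

/-- The Dollard phase `γ_σ(v, w, t)` of the paper (with slow cutoff `σ_τ^S = κ₀ τ^{-α}`
and `t_σ = min(t, (κ₀/σ)^{1/α})`), with `w` in place of `∇E_{2,p,σ}` and `v` the cell
velocity. -/
noncomputable def gammaPhase (α κ₀ lam σ : ℝ) (v w : EuclideanSpace ℝ (Fin 3)) (t : ℝ) : ℝ :=
  -(lam ^ 2) * ∫ τ in (1:ℝ)..(min t ((κ₀ / σ) ^ (1 / α))),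
      ∫ r in σ..(κ₀ * τ ^ (-α)),
        ∫ φ in (0:ℝ)..(2 * Real.pi),
          ∫ θ in (0:ℝ)..Real.pi,
            Real.cos (r * τ * (⟪sphDir θ φ, w⟫ - 1)) / (1 - ⟪sphDir θ φ, v⟫) *
              Real.sin θ

open MeasureTheory intervalIntegral Real

lemma inner_sphDir (θ φ : ℝ) (u : EuclideanSpace ℝ (Fin 3)) :
    ⟪sphDir θ φ, u⟫ = Real.sin θ * Real.cos φ * u 0 + Real.sin θ * Real.sin φ * u 1
      + Real.cos θ * u 2 := by
  simp [sphDir, PiLp.inner_apply, Fin.sum_univ_three, RCLike.inner_apply]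
  ring

lemma norm_sphDir (θ φ : ℝ) : ‖sphDir θ φ‖ = 1 := by
  rw [EuclideanSpace.norm_eq]
  have h1 := Real.sin_sq_add_cos_sq θ
  have h2 := Real.sin_sq_add_cos_sq φ
  have : ∑ i : Fin 3, ‖sphDir θ φ i‖ ^ 2 = 1 := by
    simp [sphDir, Fin.sum_univ_three, sq_abs]
    nlinarith [sq_nonneg (Real.sin θ)]
  rw [this, Real.sqrt_one]

lemma abs_inner_sphDir_le (θ φ : ℝ) (u : EuclideanSpace ℝ (Fin 3)) :
    |⟪sphDir θ φ, u⟫| ≤ ‖u‖ := by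
  calc |⟪sphDir θ φ, u⟫| ≤ ‖sphDir θ φ‖ * ‖u‖ := abs_real_inner_le_norm _ _
  _ = ‖u‖ := by rw [norm_sphDir, one_mul]

lemma continuous_inner_sphDir (u : EuclideanSpace ℝ (Fin 3)) :
    Continuous (fun p : ℝ × ℝ => ⟪sphDir p.1 p.2, u⟫) := by
  simp only [inner_sphDir]
  fun_prop


lemma swap_le {f : ℝ → ℝ → ℝ} (hf : Continuous (Function.uncurry f)) {a b c d : ℝ}
    (hab : a ≤ b) (hcd : c ≤ d) :
    ∫ x in a..b, ∫ y in c..d, f x y = ∫ y in c..d, ∫ x in a..b, f x y := by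
  rw [intervalIntegral.integral_of_le hab, intervalIntegral.integral_of_le hcd]
  simp_rw [intervalIntegral.integral_of_le hcd, intervalIntegral.integral_of_le hab]
  apply MeasureTheory.integral_integral_swap
  rw [Measure.prod_restrict]
  have : IntegrableOn (Function.uncurry f) (Set.Icc a b ×ˢ Set.Icc c d) (volume.prod volume) :=
    hf.continuousOn.integrableOn_compact (isCompact_Icc.prod isCompact_Icc)
  exact this.mono_set (Set.prod_mono Set.Ioc_subset_Icc_self Set.Ioc_subset_Icc_self)

lemma swap_cont {f : ℝ → ℝ → ℝ} (hf : Continuous (Function.uncurry f)) (a b c d : ℝ) :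
    ∫ x in a..b, ∫ y in c..d, f x y = ∫ y in c..d, ∫ x in a..b, f x y := by
  rcases le_total a b with hab | hab <;> rcases le_total c d with hcd | hcd
  · exact swap_le hf hab hcd
  · simp_rw [integral_symm d c, intervalIntegral.integral_neg, neg_inj]
    exact swap_le hf hab hcd
  · simp_rw [integral_symm b a, intervalIntegral.integral_neg, neg_inj]
    exact swap_le hf hab hcd
  · simp_rw [integral_symm b a, integral_symm d c, intervalIntegral.integral_neg, neg_neg]
    exact swap_le hf hab hcd


lemma integral_cos_mul' {c : ℝ} (hc : c ≠ 0) (a b : ℝ) :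
    ∫ r in a..b, Real.cos (c * r) = (Real.sin (c * b) - Real.sin (c * a)) / c := by
  have : ∀ x ∈ Set.uIcc a b, HasDerivAt (fun r => Real.sin (c * r) / c) (Real.cos (c * x)) x := by
    intro x _
    have h1 : HasDerivAt (fun r => c * r) c x := by simpa using (hasDerivAt_id x).const_mul c
    have := (Real.hasDerivAt_sin (c * x)).comp x h1
    have h2 := this.div_const c
    simpa [mul_comm, mul_div_assoc, mul_div_cancel_left₀ _ hc] using h2
  rw [intervalIntegral.integral_eq_sub_of_hasDerivAt this
    ((Real.continuous_cos.comp (continuous_const.mul continuous_id)).intervalIntegrable a b)]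
  ring


lemma contOn_sin_rpow (c β : ℝ) {a b : ℝ} (ha : 1 ≤ a) (hb : 1 ≤ b) :
    ContinuousOn (fun τ : ℝ => Real.sin (c * τ ^ β) / τ) (Set.uIcc a b) := by
  intro x hx
  have hx1 : 1 ≤ x := le_trans (le_min ha hb) hx.1
  have hx0 : x ≠ 0 := by linarith
  exact (((Real.continuous_sin.continuousAt).comp
    ((continuousAt_const.mul (Real.continuousAt_rpow_const x β (Or.inl hx0))))).div
    continuousAt_id hx0).continuousWithinAt

lemma contOn_cospart (c β : ℝ) {a b : ℝ} (ha : 1 ≤ a) (hb : 1 ≤ b) :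
    ContinuousOn (fun τ : ℝ => Real.cos (c * τ ^ β) * (c⁻¹ * τ ^ (-(β + 1)))) (Set.uIcc a b) := by
  intro x hx
  have hx1 : 1 ≤ x := le_trans (le_min ha hb) hx.1
  have hx0 : x ≠ 0 := by linarith
  exact (((Real.continuous_cos.continuousAt).comp
    ((continuousAt_const.mul (Real.continuousAt_rpow_const x β (Or.inl hx0))))).mul
    (continuousAt_const.mul (Real.continuousAt_rpow_const x _ (Or.inl hx0)))).continuousWithinAt

/-- Integration-by-parts bound for the Si-type integral. -/
lemma si_ibp {c β a b : ℝ} (hc : 0 < c) (hβ : 0 < β) (ha : 1 ≤ a) (hab : a ≤ b) :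
    |∫ τ in a..b, Real.sin (c * τ ^ β) / τ| ≤ 2 / (c * β * a ^ β) := by
  have hb : 1 ≤ b := ha.trans hab
  set F : ℝ → ℝ := fun τ => -Real.cos (c * τ ^ β) / (c * β * τ ^ β) with hF
  have hderiv : ∀ x ∈ Set.uIcc a b,
      HasDerivAt F (Real.sin (c * x ^ β) / x + Real.cos (c * x ^ β) * (c⁻¹ * x ^ (-(β + 1)))) x := by
    intro x hx
    have hx1 : 1 ≤ x := le_trans (le_min ha hb) hx.1
    have hx0 : (0:ℝ) < x := by linarith
    have hxβ : (0:ℝ) < x ^ β := Real.rpow_pos_of_pos hx0 β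
    have h1 : HasDerivAt (fun τ : ℝ => τ ^ β) (β * x ^ (β - 1)) x :=
      Real.hasDerivAt_rpow_const (Or.inl hx0.ne')
    have h2 : HasDerivAt (fun τ : ℝ => -Real.cos (c * τ ^ β))
        (Real.sin (c * x ^ β) * (c * (β * x ^ (β - 1)))) x := by
      have := ((Real.hasDerivAt_cos (c * x ^ β)).comp x (h1.const_mul c)).neg
      exact this.congr_deriv (by ring)
    have h3 : HasDerivAt (fun τ : ℝ => c * β * τ ^ β) (c * β * (β * x ^ (β - 1))) x :=
      h1.const_mul (c * β)
    have hg : c * β * x ^ β ≠ 0 := by positivity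
    have := h2.div h3 hg
    refine this.congr_deriv ?_
    symm
    have e1 : x ^ (β - 1) = x ^ β / x := by
      rw [Real.rpow_sub hx0, Real.rpow_one]
    have e2 : x ^ (-(β + 1)) = (x ^ β * x)⁻¹ := by
      rw [Real.rpow_neg hx0.le, Real.rpow_add hx0, Real.rpow_one]
    rw [e1, e2]
    field_simp
    ring
  have hint1 : IntervalIntegrable (fun τ : ℝ => Real.sin (c * τ ^ β) / τ) volume a b :=
    (contOn_sin_rpow c β ha hb).intervalIntegrable
  have hint2 : IntervalIntegrable
      (fun τ : ℝ => Real.cos (c * τ ^ β) * (c⁻¹ * τ ^ (-(β + 1)))) volume a b :=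
    (contOn_cospart c β ha hb).intervalIntegrable
  have hFTC : (∫ τ in a..b, (Real.sin (c * τ ^ β) / τ
      + Real.cos (c * τ ^ β) * (c⁻¹ * τ ^ (-(β + 1))))) = F b - F a :=
    intervalIntegral.integral_eq_sub_of_hasDerivAt hderiv (hint1.add hint2)
  rw [intervalIntegral.integral_add hint1 hint2] at hFTC
  have key : (∫ τ in a..b, Real.sin (c * τ ^ β) / τ)
      = F b - F a - ∫ τ in a..b, Real.cos (c * τ ^ β) * (c⁻¹ * τ ^ (-(β + 1))) := by
    linarith [hFTC]
  -- bounds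
  have ha0 : (0:ℝ) < a := by linarith
  have hb0 : (0:ℝ) < b := by linarith
  have haβ : (0:ℝ) < a ^ β := Real.rpow_pos_of_pos ha0 β
  have hbβ : (0:ℝ) < b ^ β := Real.rpow_pos_of_pos hb0 β
  have habβ : a ^ β ≤ b ^ β := Real.rpow_le_rpow ha0.le hab hβ.le
  have hFb : |F b| ≤ 1 / (c * β * b ^ β) := by
    rw [hF, abs_div, abs_of_pos (by positivity : (0:ℝ) < c * β * b ^ β)]
    gcongr
    rw [abs_neg]; exact Real.abs_cos_le_one _
  have hFa : |F a| ≤ 1 / (c * β * a ^ β) := by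
    rw [hF, abs_div, abs_of_pos (by positivity : (0:ℝ) < c * β * a ^ β)]
    gcongr
    rw [abs_neg]; exact Real.abs_cos_le_one _
  have hgint : IntervalIntegrable (fun τ : ℝ => c⁻¹ * τ ^ (-(β + 1))) volume a b := by
    apply ContinuousOn.intervalIntegrable
    intro x hx
    have hx1 : 1 ≤ x := le_trans (le_min ha hb) hx.1
    have hx0 : x ≠ 0 := by linarith
    exact (continuousAt_const.mul
      (Real.continuousAt_rpow_const x _ (Or.inl hx0))).continuousWithinAt
  have hexp : -(β + 1) + 1 = -β := by ring
  have hrpow : (∫ τ in a..b, τ ^ (-(β + 1))) = (a ^ (-β) - b ^ (-β)) / β := by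
    rw [integral_rpow (Or.inr ⟨by
      intro h
      have : β = 0 := by linarith [neg_injective h]
      exact hβ.ne' this, by
      intro h
      have : (1:ℝ) ≤ 0 := le_trans (le_min ha hb) h.1
      linarith⟩), hexp]
    rw [div_eq_div_iff (by linarith) (by positivity)]
    ring
  have hcosb : |∫ τ in a..b, Real.cos (c * τ ^ β) * (c⁻¹ * τ ^ (-(β + 1)))|
      ≤ c⁻¹ * ((a ^ (-β) - b ^ (-β)) / β) := by
    have h1 : |∫ τ in a..b, Real.cos (c * τ ^ β) * (c⁻¹ * τ ^ (-(β + 1)))|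
        ≤ ∫ τ in a..b, |Real.cos (c * τ ^ β) * (c⁻¹ * τ ^ (-(β + 1)))| := by
      have h0 := intervalIntegral.norm_integral_le_integral_norm (f := fun τ : ℝ =>
          Real.cos (c * τ ^ β) * (c⁻¹ * τ ^ (-(β + 1)))) (μ := volume) hab
      simp only [Real.norm_eq_abs] at h0
      exact h0
    have h2 : (∫ τ in a..b, |Real.cos (c * τ ^ β) * (c⁻¹ * τ ^ (-(β + 1)))|)
        ≤ ∫ τ in a..b, c⁻¹ * τ ^ (-(β + 1)) := by
      apply intervalIntegral.integral_mono_on hab hint2.abs hgint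
      intro x hx
      have hx0 : (0:ℝ) < x := lt_of_lt_of_le (by linarith) hx.1
      have hxp : (0:ℝ) < c⁻¹ * x ^ (-(β + 1)) := by
        have := Real.rpow_pos_of_pos hx0 (-(β + 1)); positivity
      rw [abs_mul, abs_of_pos hxp]
      exact mul_le_of_le_one_left hxp.le (Real.abs_cos_le_one _)
    calc _ ≤ _ := h1.trans h2
      _ = c⁻¹ * ((a ^ (-β) - b ^ (-β)) / β) := by
          rw [intervalIntegral.integral_const_mul, hrpow]
  -- assemble
  have hAn : a ^ (-β) = (a ^ β)⁻¹ := by rw [Real.rpow_neg ha0.le]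
  have hBn : b ^ (-β) = (b ^ β)⁻¹ := by rw [Real.rpow_neg hb0.le]
  rw [hAn, hBn] at hcosb
  have heq : 1 / (c * β * b ^ β) + 1 / (c * β * a ^ β)
      + c⁻¹ * (((a ^ β)⁻¹ - (b ^ β)⁻¹) / β) = 2 / (c * β * a ^ β) := by
    field_simp
    ring
  have e1 := abs_le.mp hFb
  have e2 := abs_le.mp hFa
  have e3 := abs_le.mp hcosb
  rw [key, abs_le]
  constructor <;> nlinarith [heq, e1.1, e1.2, e2.1, e2.2, e3.1, e3.2]

lemma si_small {c β a b : ℝ} (hc : 0 < c) (hβ : 0 < β) (ha : 1 ≤ a) (hab : a ≤ b) :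
    |∫ τ in a..b, Real.sin (c * τ ^ β) / τ| ≤ c * b ^ β / β := by
  have hb : 1 ≤ b := ha.trans hab
  have ha0 : (0:ℝ) < a := by linarith
  have hb0 : (0:ℝ) < b := by linarith
  have hint1 : IntervalIntegrable (fun τ : ℝ => Real.sin (c * τ ^ β) / τ) volume a b :=
    (contOn_sin_rpow c β ha hb).intervalIntegrable
  have hgint : IntervalIntegrable (fun τ : ℝ => c * τ ^ (β - 1)) volume a b := by
    apply ContinuousOn.intervalIntegrable
    intro x hx
    have hx1 : 1 ≤ x := le_trans (le_min ha hb) hx.1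
    exact (continuousAt_const.mul (Real.continuousAt_rpow_const x _
      (Or.inl (by intro h; rw [h] at hx1; linarith)))).continuousWithinAt
  have h1 := intervalIntegral.norm_integral_le_integral_norm
    (f := fun τ : ℝ => Real.sin (c * τ ^ β) / τ) (μ := volume) hab
  simp only [Real.norm_eq_abs] at h1
  have h2 : (∫ τ in a..b, |Real.sin (c * τ ^ β) / τ|) ≤ ∫ τ in a..b, c * τ ^ (β - 1) := by
    apply intervalIntegral.integral_mono_on hab hint1.abs hgint
    intro x hx
    have hx0 : (0:ℝ) < x := lt_of_lt_of_le (by linarith) hx.1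
    have hxβ : (0:ℝ) < x ^ β := Real.rpow_pos_of_pos hx0 β
    rw [abs_div, abs_of_pos hx0, div_le_iff₀ hx0]
    calc |Real.sin (c * x ^ β)| ≤ |c * x ^ β| := Real.abs_sin_le_abs
      _ = c * x ^ β := abs_of_pos (by positivity)
      _ = c * x ^ (β - 1) * x := by
          rw [Real.rpow_sub hx0, Real.rpow_one]; field_simp
  have h3 : (∫ τ in a..b, c * τ ^ (β - 1)) = c * ((b ^ β - a ^ β) / β) := by
    rw [intervalIntegral.integral_const_mul, integral_rpow (Or.inl (by linarith))]
    norm_num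
  have haβ : (0:ℝ) < a ^ β := Real.rpow_pos_of_pos ha0 β
  calc |∫ τ in a..b, Real.sin (c * τ ^ β) / τ| ≤ ∫ τ in a..b, c * τ ^ (β - 1) := h1.trans h2
    _ = c * ((b ^ β - a ^ β) / β) := h3
    _ ≤ c * b ^ β / β := by
        rw [mul_div_assoc]
        gcongr
        linarith

lemma si_bound {c β b : ℝ} (hc : c ≠ 0) (hβ : 0 < β) (hb : 1 ≤ b) :
    |∫ τ in (1:ℝ)..b, Real.sin (c * τ ^ β) / τ| ≤ 3 / β := by
  have main : ∀ c : ℝ, 0 < c → |∫ τ in (1:ℝ)..b, Real.sin (c * τ ^ β) / τ| ≤ 3 / β := by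
    intro c hc
    rcases le_or_gt 1 c with h1c | h1c
    · refine (si_ibp hc hβ le_rfl hb).trans ?_
      rw [Real.one_rpow, mul_one, div_le_div_iff₀ (by positivity) hβ]
      nlinarith
    · set s : ℝ := c ^ (-β⁻¹) with hs
      have hs1 : 1 < s := by
        rw [hs]
        rw [Real.one_lt_rpow_iff_of_pos hc]
        exact Or.inr ⟨h1c, neg_lt_zero.mpr (inv_pos.mpr hβ)⟩
      have hsβ : s ^ β = c⁻¹ := by
        rw [hs, ← Real.rpow_mul hc.le]
        rw [show -β⁻¹ * β = -1 by field_simp]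
        exact Real.rpow_neg_one c
      rcases le_or_gt b s with hbs | hbs
      · refine (si_small hc hβ le_rfl hb).trans ?_
        have : b ^ β ≤ s ^ β := Real.rpow_le_rpow (by linarith) hbs hβ.le
        rw [hsβ] at this
        have h4 : c * b ^ β ≤ 1 := by
          rw [← mul_inv_cancel₀ hc.ne']
          gcongr
        have : c * b ^ β / β ≤ 1 / β := by gcongr
        refine this.trans ?_
        gcongr <;> norm_num
      · have hsb : s ≤ b := hbs.le
        have i1 : IntervalIntegrable (fun τ : ℝ => Real.sin (c * τ ^ β) / τ) volume 1 s :=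
          (contOn_sin_rpow c β le_rfl hs1.le).intervalIntegrable
        have i2 : IntervalIntegrable (fun τ : ℝ => Real.sin (c * τ ^ β) / τ) volume s b :=
          (contOn_sin_rpow c β hs1.le (hs1.le.trans hsb)).intervalIntegrable
        rw [← intervalIntegral.integral_add_adjacent_intervals i1 i2]
        have b1 : |∫ τ in (1:ℝ)..s, Real.sin (c * τ ^ β) / τ| ≤ 1 / β := by
          refine (si_small hc hβ le_rfl hs1.le).trans ?_
          rw [hsβ, mul_inv_cancel₀ hc.ne']
        have b2 : |∫ τ in s..b, Real.sin (c * τ ^ β) / τ| ≤ 2 / β := by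
          refine (si_ibp hc hβ hs1.le hsb).trans ?_
          rw [hsβ]
          rw [show c * β * c⁻¹ = β by field_simp]
        calc |(∫ τ in (1:ℝ)..s, Real.sin (c * τ ^ β) / τ)
            + ∫ τ in s..b, Real.sin (c * τ ^ β) / τ| ≤ _ + _ := abs_add_le _ _
          _ ≤ 1 / β + 2 / β := add_le_add b1 b2
          _ = 3 / β := by ring
  rcases hc.lt_or_gt with hneg | hpos
  · have hrw : ∀ τ : ℝ, Real.sin (c * τ ^ β) / τ = -(Real.sin (-c * τ ^ β) / τ) := by
      intro τ
      rw [show c * τ ^ β = -(-c * τ ^ β) by ring, Real.sin_neg]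
      ring
    rw [intervalIntegral.integral_congr (g := fun τ => -(Real.sin (-c * τ ^ β) / τ)) (fun x _ => hrw x), intervalIntegral.integral_neg, abs_neg]
    exact main (-c) (by linarith)
  · exact main c hpos

noncomputable def xF (w : EuclideanSpace ℝ (Fin 3)) (θ φ : ℝ) : ℝ := ⟪sphDir θ φ, w⟫ - 1

noncomputable def dF (v : EuclideanSpace ℝ (Fin 3)) (θ φ : ℝ) : ℝ := 1 - ⟪sphDir θ φ, v⟫

lemma continuous_xF (w : EuclideanSpace ℝ (Fin 3)) :
    Continuous fun q : ℝ × ℝ => xF w q.1 q.2 :=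
  (continuous_inner_sphDir w).sub continuous_const

lemma continuous_dF (v : EuclideanSpace ℝ (Fin 3)) :
    Continuous fun q : ℝ × ℝ => dF v q.1 q.2 :=
  continuous_const.sub (continuous_inner_sphDir v)

lemma continuous_xF₂ {X : Type*} [TopologicalSpace X] (w : EuclideanSpace ℝ (Fin 3))
    {f g : X → ℝ} (hf : Continuous f) (hg : Continuous g) :
    Continuous fun z => xF w (f z) (g z) := by
  have h := (continuous_xF w).comp (hf.prodMk hg)
  exact h

lemma continuous_dF₂ {X : Type*} [TopologicalSpace X] (v : EuclideanSpace ℝ (Fin 3))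
    {f g : X → ℝ} (hf : Continuous f) (hg : Continuous g) :
    Continuous fun z => dF v (f z) (g z) := by
  have h := (continuous_dF v).comp (hf.prodMk hg)
  exact h

noncomputable def gF (α κ₀ σ : ℝ) (v w : EuclideanSpace ℝ (Fin 3)) (τ θ φ : ℝ) : ℝ :=
  (Real.sin (κ₀ * xF w θ φ * (max 1 τ) ^ (1 - α)) - Real.sin (σ * xF w θ φ * max 1 τ))
    / (max 1 τ * xF w θ φ) * (Real.sin θ / dF v θ φ)

lemma gF_continuous₂ {X : Type*} [TopologicalSpace X] (α κ₀ σ : ℝ)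
    (v w : EuclideanSpace ℝ (Fin 3)) (hβ : 0 ≤ 1 - α)
    (hx : ∀ θ φ, xF w θ φ ≠ 0) (hd : ∀ θ φ, dF v θ φ ≠ 0)
    {f g h : X → ℝ} (hf : Continuous f) (hg : Continuous g) (hh : Continuous h) :
    Continuous fun z => gF α κ₀ σ v w (f z) (g z) (h z) := by
  unfold gF
  have hXc : Continuous fun z => xF w (g z) (h z) := continuous_xF₂ w hg hh
  have hDc : Continuous fun z => dF v (g z) (h z) := continuous_dF₂ v hg hh
  have hmz : Continuous fun z => max 1 (f z) := continuous_const.max hf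
  have hmne : ∀ τ : ℝ, max 1 τ ≠ 0 := fun τ => by
    have h1 : (1:ℝ) ≤ max 1 τ := le_max_left 1 τ
    intro h0; rw [h0] at h1; linarith
  have hmβ : Continuous fun z => (max 1 (f z)) ^ (1 - α) :=
    hmz.rpow_const (fun z => Or.inr hβ)
  apply Continuous.mul
  · apply Continuous.div
    · have h1 := Real.continuous_sin.comp
        (((continuous_const : Continuous fun _ : X => κ₀).mul hXc).mul hmβ)
      have h2 := Real.continuous_sin.comp
        (((continuous_const : Continuous fun _ : X => σ).mul hXc).mul hmz)
      exact h1.sub h2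
    · exact hmz.mul hXc
    · intro z; exact mul_ne_zero (hmne _) (hx _ _)
  · apply Continuous.div
    · have h1 := Real.continuous_sin.comp hg
      exact h1
    · exact hDc
    · intro z; exact hd _ _

lemma alg_aux (A B τ x sθ d : ℝ) (hτ : τ ≠ 0) (hx : x ≠ 0) (hd : d ≠ 0) :
    (A - B) / (τ * x) * (sθ / d) = (A / τ - B / τ) * (sθ / (x * d)) := by
  field_simp
  try exact Or.inl trivial

lemma si_bound_lin {c b : ℝ} (hc : c ≠ 0) (hb : 1 ≤ b) :
    |∫ τ in (1:ℝ)..b, Real.sin (c * τ) / τ| ≤ 3 := by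
  have h := si_bound hc one_pos hb
  simp_rw [Real.rpow_one] at h
  norm_num at h
  exact h

lemma intInt_sin_lin (c : ℝ) {a b : ℝ} (ha : 1 ≤ a) (hb : 1 ≤ b) :
    IntervalIntegrable (fun τ : ℝ => Real.sin (c * τ) / τ) volume a b := by
  apply ContinuousOn.intervalIntegrable
  intro τ' hτ'
  have h1 : 1 ≤ τ' := le_trans (le_min ha hb) hτ'.1
  have h0 : τ' ≠ 0 := by intro h; rw [h] at h1; linarith
  exact ((Real.continuous_sin.comp (continuous_const.mul continuous_id)).continuousAt.div
    continuousAt_id h0).continuousWithinAt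


set_option maxHeartbeats 1000000 in
/-- Lemma H.2 ('phase-lemma'), bound (H.6a): `|γ_σ(v, w, t)| ≤ c λ²` uniformly in
`σ ∈ (0, κ₀]`, `t ≥ 1`, `|v| ≤ v₀` and `|w| ≤ w₁`, with `c` depending only on
`α`, `v₀`, `w₁`. -/
theorem gammaPhase_bound (α v₀ w₁ : ℝ) (hα₁ : 1 / 2 < α) (hα₂ : α < 1)
    (hv₀ : 0 < v₀) (hv₀' : v₀ < 1) (hw₁ : 0 < w₁) (hw₁' : w₁ < 1) :
    ∃ c : ℝ, 0 < c ∧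
      ∀ (κ₀ lam σ t : ℝ) (v w : EuclideanSpace ℝ (Fin 3)),
        0 < κ₀ → 0 < σ → σ ≤ κ₀ → 1 ≤ t → ‖v‖ ≤ v₀ → ‖w‖ ≤ w₁ →
        |gammaPhase α κ₀ lam σ v w t| ≤ c * lam ^ 2 := by
  have hβ : 0 < 1 - α := by linarith
  have hK1 : (0:ℝ) < 1 - w₁ := by linarith
  have hK2 : (0:ℝ) < 1 - v₀ := by linarith
  set K : ℝ := 1 / ((1 - w₁) * (1 - v₀)) with hKdef
  have hK : 0 < K := by positivity
  set M : ℝ := 3 / (1 - α) + 3 with hMdef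
  have hM : 0 < M := by positivity
  refine ⟨2 * Real.pi ^ 2 * M * K, by positivity, ?_⟩
  intro κ₀ lam σ t v w hκ₀ hσ hσκ ht hv hw
  have hxub : ∀ θ φ, xF w θ φ ≤ -(1 - w₁) := by
    intro θ φ
    have h := (abs_le.mp ((abs_inner_sphDir_le θ φ w).trans hw)).2
    simp only [xF]
    linarith
  have hxne : ∀ θ φ, xF w θ φ ≠ 0 := by
    intro θ φ; have := hxub θ φ; intro h; rw [h] at this; linarith
  have hxabs : ∀ θ φ, 1 - w₁ ≤ |xF w θ φ| := by
    intro θ φ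
    have h := hxub θ φ
    rw [abs_of_neg (by linarith)]
    linarith
  have hdlb : ∀ θ φ, 1 - v₀ ≤ dF v θ φ := by
    intro θ φ
    have h := (abs_le.mp ((abs_inner_sphDir_le θ φ v).trans hv)).2
    simp only [dF]
    linarith
  have hdne : ∀ θ φ, dF v θ φ ≠ 0 := by
    intro θ φ; have := hdlb θ φ; intro h; rw [h] at this; linarith
  set T : ℝ := min t ((κ₀ / σ) ^ (1 / α)) with hTdef
  have hT : 1 ≤ T := by
    apply le_min ht
    apply Real.one_le_rpow
    · rw [le_div_iff₀ hσ]; linarith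
    · positivity
  -- Step A : compute the r-integral for τ ≥ 1
  have hA : ∀ τ : ℝ, 1 ≤ τ →
      (∫ r in σ..(κ₀ * τ ^ (-α)), ∫ φ in (0:ℝ)..(2 * Real.pi), ∫ θ in (0:ℝ)..Real.pi,
        Real.cos (r * τ * xF w θ φ) / dF v θ φ * Real.sin θ)
      = ∫ φ in (0:ℝ)..(2 * Real.pi), ∫ θ in (0:ℝ)..Real.pi, gF α κ₀ σ v w τ θ φ := by
    intro τ hτ
    have hτ0 : (0:ℝ) < τ := by linarith
    have hcf : Continuous (Function.uncurry fun (p : ℝ × ℝ) (θ : ℝ) =>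
        Real.cos (p.1 * τ * xF w θ p.2) / dF v θ p.2 * Real.sin θ) := by
      have hXc : Continuous fun z : (ℝ × ℝ) × ℝ => xF w z.2 z.1.2 :=
        continuous_xF₂ w (by fun_prop) (by fun_prop)
      have hDc : Continuous fun z : (ℝ × ℝ) × ℝ => dF v z.2 z.1.2 :=
        continuous_dF₂ v (by fun_prop) (by fun_prop)
      have h := ((Real.continuous_cos.comp
        (((by fun_prop : Continuous fun z : (ℝ × ℝ) × ℝ => z.1.1 * τ)).mul hXc)).div
        hDc (fun z => hdne _ _)).mul
        ((by fun_prop : Continuous fun z : (ℝ × ℝ) × ℝ => Real.sin z.2))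
      exact h
    have h1 : (∫ r in σ..(κ₀ * τ ^ (-α)), ∫ φ in (0:ℝ)..(2 * Real.pi), ∫ θ in (0:ℝ)..Real.pi,
          Real.cos (r * τ * xF w θ φ) / dF v θ φ * Real.sin θ)
        = ∫ φ in (0:ℝ)..(2 * Real.pi), ∫ r in σ..(κ₀ * τ ^ (-α)), ∫ θ in (0:ℝ)..Real.pi,
          Real.cos (r * τ * xF w θ φ) / dF v θ φ * Real.sin θ := by
      apply swap_cont (f := fun r φ => ∫ θ in (0:ℝ)..Real.pi,
        Real.cos (r * τ * xF w θ φ) / dF v θ φ * Real.sin θ)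
      exact intervalIntegral.continuous_parametric_intervalIntegral_of_continuous' hcf 0 Real.pi
    have h2 : ∀ φ : ℝ, (∫ r in σ..(κ₀ * τ ^ (-α)), ∫ θ in (0:ℝ)..Real.pi,
          Real.cos (r * τ * xF w θ φ) / dF v θ φ * Real.sin θ)
        = ∫ θ in (0:ℝ)..Real.pi, ∫ r in σ..(κ₀ * τ ^ (-α)),
          Real.cos (r * τ * xF w θ φ) / dF v θ φ * Real.sin θ := by
      intro φ
      apply swap_cont (f := fun r θ => Real.cos (r * τ * xF w θ φ) / dF v θ φ * Real.sin θ)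
      have hXc : Continuous fun z : ℝ × ℝ => xF w z.2 φ :=
        continuous_xF₂ w (by fun_prop) (by fun_prop)
      have hDc : Continuous fun z : ℝ × ℝ => dF v z.2 φ :=
        continuous_dF₂ v (by fun_prop) (by fun_prop)
      have h := ((Real.continuous_cos.comp
        (((by fun_prop : Continuous fun z : ℝ × ℝ => z.1 * τ)).mul hXc)).div
        hDc (fun z => hdne _ _)).mul
        ((by fun_prop : Continuous fun z : ℝ × ℝ => Real.sin z.2))
      exact h
    have h3 : ∀ φ θ : ℝ, (∫ r in σ..(κ₀ * τ ^ (-α)),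
          Real.cos (r * τ * xF w θ φ) / dF v θ φ * Real.sin θ) = gF α κ₀ σ v w τ θ φ := by
      intro φ θ
      have hc : τ * xF w θ φ ≠ 0 := mul_ne_zero hτ0.ne' (hxne θ φ)
      have e1 : ∀ r : ℝ, Real.cos (r * τ * xF w θ φ) / dF v θ φ * Real.sin θ
          = Real.cos ((τ * xF w θ φ) * r) * (Real.sin θ / dF v θ φ) := by
        intro r; rw [show r * τ * xF w θ φ = (τ * xF w θ φ) * r by ring]; ring
      simp only [e1]
      rw [intervalIntegral.integral_mul_const, integral_cos_mul' hc]
      have hmm : max 1 τ = τ := max_eq_right hτ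
      have e2 : τ * xF w θ φ * (κ₀ * τ ^ (-α)) = κ₀ * xF w θ φ * τ ^ (1 - α) := by
        rw [show (1:ℝ) - α = 1 + (-α) by ring, Real.rpow_add hτ0, Real.rpow_one]; ring
      have e3 : τ * xF w θ φ * σ = σ * xF w θ φ * τ := by ring
      unfold gF
      rw [hmm, e2, e3]
    rw [h1]
    apply intervalIntegral.integral_congr
    intro φ _
    beta_reduce
    rw [h2 φ]
    apply intervalIntegral.integral_congr
    intro θ _
    exact h3 φ θ
  -- Step B : swap the τ-integral inside
  have hB : (∫ τ in (1:ℝ)..T, ∫ φ in (0:ℝ)..(2 * Real.pi), ∫ θ in (0:ℝ)..Real.pi,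
        gF α κ₀ σ v w τ θ φ)
      = ∫ φ in (0:ℝ)..(2 * Real.pi), ∫ θ in (0:ℝ)..Real.pi, ∫ τ in (1:ℝ)..T,
        gF α κ₀ σ v w τ θ φ := by
    have hc1 : Continuous (Function.uncurry fun (p : ℝ × ℝ) (θ : ℝ) =>
        gF α κ₀ σ v w p.1 θ p.2) := by
      have h := gF_continuous₂ (f := fun z : (ℝ × ℝ) × ℝ => z.1.1)
        (g := fun z : (ℝ × ℝ) × ℝ => z.2) (h := fun z : (ℝ × ℝ) × ℝ => z.1.2)
        α κ₀ σ v w hβ.le hxne hdne (by fun_prop) (by fun_prop) (by fun_prop)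
      exact h
    have step1 := swap_cont (f := fun τ φ => ∫ θ in (0:ℝ)..Real.pi, gF α κ₀ σ v w τ θ φ)
      (intervalIntegral.continuous_parametric_intervalIntegral_of_continuous' hc1 0 Real.pi)
      1 T 0 (2 * Real.pi)
    rw [step1]
    apply intervalIntegral.integral_congr
    intro φ _
    have hc2 : Continuous (Function.uncurry fun (τ θ : ℝ) => gF α κ₀ σ v w τ θ φ) := by
      have h := gF_continuous₂ (f := fun z : ℝ × ℝ => z.1)
        (g := fun z : ℝ × ℝ => z.2) (h := fun _ : ℝ × ℝ => φ)
        α κ₀ σ v w hβ.le hxne hdne (by fun_prop) (by fun_prop) (by fun_prop)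
      exact h
    exact swap_cont hc2 1 T 0 Real.pi
  -- Step C : uniform bound on the τ-integral
  have hC : ∀ θ φ : ℝ, |∫ τ in (1:ℝ)..T, gF α κ₀ σ v w τ θ φ| ≤ M * K := by
    intro θ φ
    have hxθ := hxne θ φ
    have hd0 := hdne θ φ
    have heq : Set.EqOn (fun τ => gF α κ₀ σ v w τ θ φ)
        (fun τ => (Real.sin (κ₀ * xF w θ φ * τ ^ (1 - α)) / τ
          - Real.sin (σ * xF w θ φ * τ) / τ)
            * (Real.sin θ / (xF w θ φ * dF v θ φ)))
        (Set.uIcc (1:ℝ) T) := by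
      intro τ hτmem
      beta_reduce
      have hτ1 : 1 ≤ τ := by
        rw [Set.uIcc_of_le hT] at hτmem; exact hτmem.1
      have hτ0 : τ ≠ 0 := by intro h; rw [h] at hτ1; linarith
      have hgg : gF α κ₀ σ v w τ θ φ
          = (Real.sin (κ₀ * xF w θ φ * τ ^ (1 - α)) - Real.sin (σ * xF w θ φ * τ))
            / (τ * xF w θ φ) * (Real.sin θ / dF v θ φ) := by
        unfold gF
        rw [max_eq_right hτ1]
      rw [hgg]
      exact alg_aux _ _ _ _ _ _ hτ0 hxθ hd0
    rw [intervalIntegral.integral_congr heq, intervalIntegral.integral_mul_const]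
    have i1 : IntervalIntegrable
        (fun τ : ℝ => Real.sin (κ₀ * xF w θ φ * τ ^ (1 - α)) / τ) volume 1 T :=
      (contOn_sin_rpow _ _ le_rfl hT).intervalIntegrable
    have i2 : IntervalIntegrable
        (fun τ : ℝ => Real.sin (σ * xF w θ φ * τ) / τ) volume 1 T :=
      intInt_sin_lin _ le_rfl hT
    rw [intervalIntegral.integral_sub i1 i2, abs_mul]
    have b1 := si_bound (mul_ne_zero hκ₀.ne' hxθ) hβ hT
    have b2 := si_bound_lin (mul_ne_zero hσ.ne' hxθ) hT
    have habsC : |Real.sin θ / (xF w θ φ * dF v θ φ)| ≤ K := by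
      rw [abs_div, abs_mul, hKdef]
      have hd0' : (0:ℝ) < dF v θ φ := lt_of_lt_of_le hK2 (hdlb θ φ)
      have hdabs : 1 - v₀ ≤ |dF v θ φ| := by rw [abs_of_pos hd0']; exact hdlb θ φ
      apply div_le_div₀ (by norm_num)
        (abs_le.mpr ⟨Real.neg_one_le_sin θ, Real.sin_le_one θ⟩) (by positivity)
      exact mul_le_mul (hxabs θ φ) hdabs (by linarith) (abs_nonneg _)
    have hsub : |(∫ τ in (1:ℝ)..T, Real.sin (κ₀ * xF w θ φ * τ ^ (1 - α)) / τ)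
        - ∫ τ in (1:ℝ)..T, Real.sin (σ * xF w θ φ * τ) / τ| ≤ M := by
      rw [hMdef]
      calc |(∫ τ in (1:ℝ)..T, Real.sin (κ₀ * xF w θ φ * τ ^ (1 - α)) / τ)
          - ∫ τ in (1:ℝ)..T, Real.sin (σ * xF w θ φ * τ) / τ|
          ≤ |∫ τ in (1:ℝ)..T, Real.sin (κ₀ * xF w θ φ * τ ^ (1 - α)) / τ|
            + |∫ τ in (1:ℝ)..T, Real.sin (σ * xF w θ φ * τ) / τ| := abs_sub _ _
        _ ≤ 3 / (1 - α) + 3 := add_le_add b1 b2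
    exact mul_le_mul hsub habsC (abs_nonneg _) hM.le
  -- assemble everything
  have hI : (∫ τ in (1:ℝ)..T, ∫ r in σ..(κ₀ * τ ^ (-α)), ∫ φ in (0:ℝ)..(2 * Real.pi),
      ∫ θ in (0:ℝ)..Real.pi, Real.cos (r * τ * xF w θ φ) / dF v θ φ * Real.sin θ)
      = ∫ φ in (0:ℝ)..(2 * Real.pi), ∫ θ in (0:ℝ)..Real.pi, ∫ τ in (1:ℝ)..T,
        gF α κ₀ σ v w τ θ φ := by
    rw [← hB]
    apply intervalIntegral.integral_congr
    intro τ hτmem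
    refine hA τ ?_
    rw [Set.uIcc_of_le hT] at hτmem; exact hτmem.1
  have hout : |∫ φ in (0:ℝ)..(2 * Real.pi), ∫ θ in (0:ℝ)..Real.pi, ∫ τ in (1:ℝ)..T,
        gF α κ₀ σ v w τ θ φ| ≤ M * K * Real.pi * (2 * Real.pi) := by
    have h1 : ∀ φ ∈ Set.uIoc (0:ℝ) (2 * Real.pi),
        ‖∫ θ in (0:ℝ)..Real.pi, ∫ τ in (1:ℝ)..T, gF α κ₀ σ v w τ θ φ‖
          ≤ M * K * Real.pi := by
      intro φ _
      have h0 : ∀ θ ∈ Set.uIoc (0:ℝ) Real.pi,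
          ‖∫ τ in (1:ℝ)..T, gF α κ₀ σ v w τ θ φ‖ ≤ M * K := by
        intro θ _
        rw [Real.norm_eq_abs]; exact hC θ φ
      have := intervalIntegral.norm_integral_le_of_norm_le_const h0
      rw [sub_zero, abs_of_pos Real.pi_pos] at this
      exact this
    have h2 := intervalIntegral.norm_integral_le_of_norm_le_const h1
    rw [sub_zero, abs_of_pos (by positivity : (0:ℝ) < 2 * Real.pi), Real.norm_eq_abs] at h2
    exact h2
  have hgp : gammaPhase α κ₀ lam σ v w t
      = -(lam ^ 2) * ∫ τ in (1:ℝ)..T, ∫ r in σ..(κ₀ * τ ^ (-α)),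
        ∫ φ in (0:ℝ)..(2 * Real.pi), ∫ θ in (0:ℝ)..Real.pi,
          Real.cos (r * τ * xF w θ φ) / dF v θ φ * Real.sin θ := by
    unfold gammaPhase xF dF
    rw [← hTdef]
  rw [hgp, hI, abs_mul, abs_neg, abs_pow, sq_abs]
  calc lam ^ 2 * |∫ φ in (0:ℝ)..(2 * Real.pi), ∫ θ in (0:ℝ)..Real.pi,
        ∫ τ in (1:ℝ)..T, gF α κ₀ σ v w τ θ φ|
      ≤ lam ^ 2 * (M * K * Real.pi * (2 * Real.pi)) :=
        mul_le_mul_of_nonneg_left hout (sq_nonneg lam)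
    _ = 2 * Real.pi ^ 2 * M * K * lam ^ 2 := by ring
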